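/- Let d be a positive non-square integer. There exist infinitely many primes p such that p divides x_{8r} + 1 for some positive integer r, where (x_n, y_n) is the sequence of positive solutions of the Pell equation x² − d·y² = 1. -/
import Mathlib

section aux

variable {d : ℤ}

private lemma x_sq' (b : Pell.Solution₁ d) : (b * b).x = 2 * b.x ^ 2 - 1 := by
  have h := b.prop
  rw [Pell.Solution₁.x_mul]
  nlinarith [h]

private lemma one_lt_x_pow {a : Pell.Solution₁ d} (hx : 1 < a.x) (hy : 0 < a.y)
    (n : ℕ) : 1 < (a ^ (n + 1)).x := by
  induction n with
  | zero => simpa using hx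
  | succ n ih =>
    have hd : 0 < d := Pell.Solution₁.d_pos_of_one_lt_x hx
    have hxp : 0 < (a ^ (n + 1)).x := Pell.Solution₁.x_pow_pos (by linarith) _
    have hyp : 0 < (a ^ (n + 1)).y :=
      Pell.Solution₁.y_pow_succ_pos (by linarith) hy n
    rw [pow_succ (a := a) (n := n + 1), Pell.Solution₁.x_mul]
    nlinarith [mul_pos hd (mul_pos hyp hy), mul_lt_mul'' ih hx (by linarith) (by linarith)]

end aux

/-- There are infinitely many primes `p` dividing `x (8r) + 1` for some `r ≥ 1`,
where `(x n, y n)` is the `n`-th positive solution of the Pell equation,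
given by the `n`-th power of the fundamental solution. -/
theorem stmt19 (d : ℤ) (hd : 0 < d) (hsq : ¬ IsSquare d)
    (a : Pell.Solution₁ d) (ha : Pell.IsFundamental a) :
    {p : ℕ | p.Prime ∧ ∃ r : ℕ, 0 < r ∧ (p : ℤ) ∣ (a ^ (8 * r)).x + 1}.Infinite := by
  obtain ⟨hx1, hy1, -⟩ := ha
  -- the doubling chain u k = x(4·2^k)
  set u : ℕ → ℤ := fun k => (a ^ (4 * 2 ^ k)).x with hu
  have hu_gt : ∀ k, 1 < u k := by
    intro k
    have h4 : 4 * 2 ^ k = (4 * 2 ^ k - 1) + 1 := by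
      have : 1 ≤ 4 * 2 ^ k := Nat.one_le_iff_ne_zero.mpr (by positivity)
      omega
    rw [hu]; dsimp only; rw [h4]
    exact one_lt_x_pow hx1 hy1 _
  have hrec : ∀ k, u (k + 1) = 2 * (u k) ^ 2 - 1 := by
    intro k
    have h2 : 4 * 2 ^ (k + 1) = 4 * 2 ^ k + 4 * 2 ^ k := by ring
    rw [hu]; dsimp only
    rw [h2, pow_add, x_sq']
  -- the prime extracted from u k
  set f : ℕ → ℕ := fun k => (u k).natAbs.minFac with hf
  have huabs : ∀ k, (u k).natAbs ≠ 1 := by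
    intro k; have := hu_gt k; omega
  have hfprime : ∀ k, (f k).Prime := fun k => Nat.minFac_prime (huabs k)
  have hfdvd : ∀ k, (f k : ℤ) ∣ u k := fun k =>
    dvd_trans (Int.natCast_dvd_natCast.mpr ((u k).natAbs.minFac_dvd))
      (Int.natAbs_dvd.mpr dvd_rfl)
  -- after step k, the u's are ≡ ±1 mod f k
  have hlater : ∀ k m, k < m → (f k : ℤ) ∣ u m + 1 ∨ (f k : ℤ) ∣ u m - 1 := by
    intro k m hkm
    induction m with
    | zero => omega
    | succ m ih =>
      rcases Nat.lt_succ_iff_lt_or_eq.mp hkm with h | h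
      · right
        have he : u (m + 1) - 1 = (2 * (u m + 1)) * (u m - 1) := by rw [hrec m]; ring
        rw [he]
        rcases ih h with hc | hc
        · exact ((hc.mul_left 2).mul_right _)
        · exact hc.mul_left _
      · left
        subst h
        have he : u (k + 1) + 1 = (2 * u k) * u k := by rw [hrec k]; ring
        rw [he]
        exact (((hfdvd k).mul_left 2).mul_right _)
  -- injectivity
  have key : ∀ j k, j < k → f j ≠ f k := by
    intro j k hlt hjk
    have h1 : (f j : ℤ) ∣ u k := hjk ▸ hfdvd k
    have hp2 : 2 ≤ f j := (hfprime j).two_le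
    have h2 : (f j : ℤ) ∣ 1 := by
      rcases hlater j k hlt with hc | hc
      · have he : (1 : ℤ) = u k + 1 - u k := by ring
        rw [he]; exact dvd_sub hc h1
      · have he : (1 : ℤ) = u k - (u k - 1) := by ring
        rw [he]; exact dvd_sub h1 hc
    have := Int.le_of_dvd one_pos h2
    omega
  have hinj : Function.Injective f := by
    intro j k hjk
    rcases lt_trichotomy j k with h | h | h
    · exact absurd hjk (key j k h)
    · exact h
    · exact absurd hjk.symm (key k j h)
  refine Set.infinite_of_injective_forall_mem hinj ?_
  intro k
  refine ⟨hfprime k, 2 ^ k, by positivity, ?_⟩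
  have h8 : 8 * 2 ^ k = 4 * 2 ^ k + 4 * 2 ^ k := by ring
  have he : (a ^ (8 * 2 ^ k)).x + 1 = (2 * u k) * u k := by
    rw [h8, pow_add, x_sq']
    have : u k = (a ^ (4 * 2 ^ k)).x := rfl
    rw [← this]; ring
  rw [he]
  exact (((hfdvd k).mul_left 2).mul_right _)
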